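/- Dual least-squares projection identity: let T : X → Y be bounded linear between Hilbert spaces, Y_n ⊆ closure(R(T)) a finite-dimensional subspace, Q_n the orthogonal projection onto Y_n, T_n := Q_n ∘ T, X_n := T*(Y_n), and P_n the orthogonal projection onto X_n. If y = Tx† with x† ∈ N(T)^⊥, then the minimum norm solution x_n of T_n x = Q_n y equals P_n x†. -/

import Mathlib

/-- Dual least-squares projection identity: with `T_n = Q_n T` for the orthogonal
projection `Q_n` onto a finite-dimensional subspace `Y_n ⊆ closure R(T)`,
`X_n = T*(Y_n)` with orthogonal projection `P_n`, and `y = T x†` for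
`x† ∈ N(T)^⊥`, the minimum norm solution `x_n` of `T_n x = Q_n y` equals `P_n x†`. -/
theorem dual_least_squares_projection
    {X Y : Type*} [NormedAddCommGroup X] [InnerProductSpace ℝ X] [CompleteSpace X]
    [NormedAddCommGroup Y] [InnerProductSpace ℝ Y] [CompleteSpace Y]
    (T : X →L[ℝ] Y)
    (Yn : Submodule ℝ Y) [FiniteDimensional ℝ Yn]
    (hYn : (Yn : Set Y) ⊆ closure (Set.range ⇑T))
    (Xn : Submodule ℝ X) [FiniteDimensional ℝ Xn]
    (hXn : Xn = Submodule.map (ContinuousLinearMap.adjoint T : Y →ₗ[ℝ] X) Yn)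
    (xdag : X) (hxdag : xdag ∈ (LinearMap.ker (T : X →ₗ[ℝ] Y))ᗮ)
    (y : Y) (hy : y = T xdag)
    (Qn : Y →L[ℝ] Y) (hQn : ∀ w : Y, Qn w = (Submodule.orthogonalProjectionOnto Yn w : Y))
    (Tn : X →L[ℝ] Y) (hTn : Tn = Qn.comp T)
    (xn : X)
    (hls : ∀ w : X, ‖Tn xn - Qn y‖ ≤ ‖Tn w - Qn y‖)
    (hmn : ∀ w : X, (∀ w' : X, ‖Tn w - Qn y‖ ≤ ‖Tn w' - Qn y‖) → ‖xn‖ ≤ ‖w‖) :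
    xn = (Submodule.orthogonalProjectionOnto Xn xdag : X) := by
  set m : X := (Submodule.orthogonalProjectionOnto Xn xdag : X) with hm
  -- ker Tn = Xnᗮ
  have hker : ∀ u : X, Tn u = 0 ↔ u ∈ Xnᗮ := by
    intro u
    have h1 : Tn u = 0 ↔ T u ∈ Ynᗮ := by
      rw [hTn]
      simp only [ContinuousLinearMap.comp_apply, hQn]
      constructor
      · intro h
        have : Submodule.orthogonalProjectionOnto Yn (T u) = 0 := by
          ext; simpa using h
        exact Submodule.orthogonalProjectionOnto_eq_zero_iff.mp this
      · intro h
        rw [Submodule.orthogonalProjectionOnto_eq_zero_iff.mpr h]; simp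
    rw [h1, hXn]
    simp only [Submodule.mem_orthogonal]
    constructor
    · intro h x hx
      rcases hx with ⟨v, hv, rfl⟩
      have h2 := h v hv
      simpa only [ContinuousLinearMap.coe_coe, ContinuousLinearMap.adjoint_inner_left] using h2
    · intro h v hv
      have h2 := h ((ContinuousLinearMap.adjoint T) v) ⟨v, hv, rfl⟩
      rwa [ContinuousLinearMap.adjoint_inner_left] at h2
  -- Qn y = Tn xdag
  have hQy : Qn y = Tn xdag := by rw [hy, hTn]; rfl
  -- Tn m = Tn xdag, since xdag - m ∈ Xnᗮ = ker Tn
  have hsub : xdag - m ∈ Xnᗮ := Submodule.sub_starProjection_mem_orthogonal (K := Xn) xdag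
  have hTm : Tn m = Tn xdag := by
    have h0 := (hker (xdag - m)).mpr hsub
    rw [map_sub, sub_eq_zero] at h0
    exact h0.symm
  -- Tn xn = Tn xdag (residual is zero)
  have hTxn : Tn xn = Tn xdag := by
    have h1 := hls xdag
    rw [hQy, sub_self, norm_zero] at h1
    rw [← sub_eq_zero]
    exact norm_le_zero_iff.mp h1
  -- xn - m ∈ ker Tn = Xnᗮ
  have hdiff : xn - m ∈ Xnᗮ := by
    apply (hker _).mp
    rw [map_sub, hTxn, hTm, sub_self]
  -- m is also a least-squares solution, so ‖xn‖ ≤ ‖m‖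
  have hle : ‖xn‖ ≤ ‖m‖ := by
    apply hmn
    intro w'
    rw [hQy, hTm, sub_self, norm_zero]
    exact norm_nonneg _
  -- orthogonality: ⟪m, xn - m⟫ = 0
  have hperp : inner ℝ (xn - m) m = (0 : ℝ) := by
    rw [real_inner_comm]
    exact (Submodule.mem_orthogonal Xn (xn - m)).mp hdiff m (Submodule.orthogonalProjectionOnto Xn xdag).2
  -- Pythagoras
  have hpyth : ‖xn‖ ^ 2 = ‖xn - m‖ ^ 2 + ‖m‖ ^ 2 := by
    have := norm_add_sq_real (xn - m) m
    rw [hperp] at this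
    simpa [sub_add_cancel] using this
  have hzero : ‖xn - m‖ = 0 := by
    have h1 : ‖xn‖ ^ 2 ≤ ‖m‖ ^ 2 := by
      apply pow_le_pow_left₀ (norm_nonneg _) hle
    nlinarith [norm_nonneg (xn - m)]
  rw [← sub_eq_zero]
  exact norm_eq_zero.mp hzero
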